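/- Let H₁ and H₂ be k-uniform hypergraphs on the same vertex set [n]. Then H₁ and H₂ are isomorphic (there is a bijection of [n] carrying the hyperedge set of H₁ onto the hyperedge set of H₂) if and only if hom(F, H₁) = hom(F, H₂) for every finite k-uniform hypergraph F. -/

import Mathlib

/-- A `k`-uniform hypergraph on vertex set `Fin n`: the hyperedges are `k`-element
subsets of the vertices. -/
structure KUniformHypergraph (k n : ℕ) where
  edges : Finset (Finset (Fin n))
  uniform : ∀ e ∈ edges, e.card = k

/-- `hom(F, H)`: the number of maps `φ : [p] → [n]` carrying every hyperedge of `F`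
to a hyperedge of `H`. -/
noncomputable def homCount {k p n : ℕ} (F : KUniformHypergraph k p) (H : KUniformHypergraph k n) : ℕ :=
  Nat.card {φ : Fin p → Fin n // ∀ e ∈ F.edges, e.image φ ∈ H.edges}

namespace HGaux

variable {k p n : ℕ}

/-- The homomorphism condition. -/
def cond (F : KUniformHypergraph k p) (H : KUniformHypergraph k n) (φ : Fin p → Fin n) : Prop :=
  ∀ e ∈ F.edges, e.image φ ∈ H.edges

instance (F : KUniformHypergraph k p) (H : KUniformHypergraph k n) : DecidablePred (cond F H) := fun _ => by
  unfold cond; infer_instance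

noncomputable def injCount (F : KUniformHypergraph k p) (H : KUniformHypergraph k n) : ℕ :=
  Nat.card {φ : Fin p → Fin n // Function.Injective φ ∧ cond F H φ}

lemma homCount_eq (F : KUniformHypergraph k p) (H : KUniformHypergraph k n) :
    homCount F H = (Finset.univ.filter (cond F H)).card := by
  rw [homCount, Nat.card_eq_fintype_card, Fintype.card_subtype]
  rfl

lemma injCount_eq (F : KUniformHypergraph k p) (H : KUniformHypergraph k n) :
    injCount F H =
      (Finset.univ.filter (fun φ => Function.Injective φ ∧ cond F H φ)).card := by
  rw [injCount, Nat.card_eq_fintype_card, Fintype.card_subtype]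

/-- kernel map: send `x` to the least element with the same `φ`-value. -/
def ker (φ : Fin p → Fin n) (x : Fin p) : Fin p :=
  (Finset.univ.filter (fun y => φ y = φ x)).min' ⟨x, by simp⟩

lemma φ_ker (φ : Fin p → Fin n) (x : Fin p) : φ (ker φ x) = φ x := by
  have := (Finset.univ.filter (fun y => φ y = φ x)).min'_mem ⟨x, by simp⟩
  simpa [ker] using this

lemma ker_le (φ : Fin p → Fin n) (x : Fin p) : ker φ x ≤ x :=
  Finset.min'_le _ _ (by simp)

lemma ker_congr {φ : Fin p → Fin n} {x y : Fin p} (h : φ x = φ y) : ker φ x = ker φ y := by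
  unfold ker
  congr 1
  simp [h]

lemma ker_idem (φ : Fin p → Fin n) (x : Fin p) : ker φ (ker φ x) = ker φ x :=
  ker_congr (φ_ker φ x)

lemma φ_eq_of_ker {φ : Fin p → Fin n} {x y : Fin p} (h : ker φ x = ker φ y) : φ x = φ y := by
  rw [← φ_ker φ x, h, φ_ker φ y]

/-- Characterization: if `r` is an idempotent decreasing map whose fibers are the fibers
of `φ`, then `ker φ = r`. -/
lemma ker_of {φ : Fin p → Fin n} {r : Fin p → Fin p}
    (hidem : ∀ x, r (r x) = r x) (hle : ∀ x, r x ≤ x)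
    (hiff : ∀ x y, φ x = φ y ↔ r x = r y) : ker φ = r := by
  funext x
  apply le_antisymm
  · exact Finset.min'_le _ _ (by simp [(hiff (r x) x).2 (hidem x)])
  · apply Finset.le_min'
    intro y hy
    have : r y = r x := (hiff y x).1 (by simpa using hy)
    calc r x = r y := this.symm
      _ ≤ y := hle y

def Retr : Finset (Fin p → Fin p) :=
  Finset.univ.filter (fun r => (∀ x, r (r x) = r x) ∧ ∀ x, r x ≤ x)

lemma ker_mem_Retr (φ : Fin p → Fin n) : ker φ ∈ (Retr : Finset (Fin p → Fin p)) := by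
  simp only [Retr, Finset.mem_filter, Finset.mem_univ, true_and]
  exact ⟨ker_idem φ, ker_le φ⟩

lemma id_mem_Retr : (id : Fin p → Fin p) ∈ (Retr : Finset (Fin p → Fin p)) := by
  simp [Retr]

/-- fixed points of `r` -/
def fixS (r : Fin p → Fin p) : Finset (Fin p) := Finset.univ.filter (fun x => r x = x)

lemma rx_mem_fixS {r : Fin p → Fin p} (hidem : ∀ x, r (r x) = r x) (x : Fin p) :
    r x ∈ fixS r := by simp [fixS, hidem]

/-- quotient map to `Fin (fixS r).card` -/
noncomputable def qmap (r : Fin p → Fin p) (hidem : ∀ x, r (r x) = r x) :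
    Fin p → Fin (fixS r).card :=
  fun x => ((fixS r).orderIsoOfFin rfl).symm ⟨r x, rx_mem_fixS hidem x⟩

noncomputable def smap (r : Fin p → Fin p) : Fin (fixS r).card → Fin p :=
  fun j => ((fixS r).orderIsoOfFin rfl j : Fin p)

lemma qmap_eq_iff {r : Fin p → Fin p} (hidem : ∀ x, r (r x) = r x) {x y : Fin p} :
    qmap r hidem x = qmap r hidem y ↔ r x = r y := by
  unfold qmap
  rw [EmbeddingLike.apply_eq_iff_eq, Subtype.mk.injEq]

lemma smap_qmap {r : Fin p → Fin p} (hidem : ∀ x, r (r x) = r x) (x : Fin p) :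
    smap r (qmap r hidem x) = r x := by
  unfold smap qmap
  simp

lemma smap_mem_fixS (r : Fin p → Fin p) (j : Fin (fixS r).card) : smap r j ∈ fixS r :=
  (((fixS r).orderIsoOfFin rfl) j).2

lemma r_smap {r : Fin p → Fin p} (j : Fin (fixS r).card) : r (smap r j) = smap r j := by
  have := smap_mem_fixS r j
  simpa [fixS] using this

lemma qmap_smap {r : Fin p → Fin p} (hidem : ∀ x, r (r x) = r x) (j : Fin (fixS r).card) :
    qmap r hidem (smap r j) = j := by
  unfold qmap
  rw [OrderIso.symm_apply_eq]
  ext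
  exact congrArg Fin.val (r_smap j)

/-- quotient hypergraph, for edge-injective retractions -/
noncomputable def quotH (F : KUniformHypergraph k p) (r : Fin p → Fin p)
    (hidem : ∀ x, r (r x) = r x) (hr : ∀ e ∈ F.edges, (e.image r).card = k) :
    KUniformHypergraph k (fixS r).card where
  edges := F.edges.image (fun e => e.image (qmap r hidem))
  uniform := by
    intro e he
    rw [Finset.mem_image] at he
    obtain ⟨ed, hed, rfl⟩ := he
    have h1 : ed.image (qmap r hidem) = (ed.image r).image (qmap r hidem) := by
      rw [Finset.image_image]
      apply Finset.image_congr
      intro x _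
      exact (qmap_eq_iff hidem).2 (hidem x).symm
    rw [h1, Finset.card_image_of_injOn, hr ed hed]
    intro a ha b hb hab
    simp only [Finset.coe_image, Set.mem_image] at ha hb
    obtain ⟨a', _, rfl⟩ := ha
    obtain ⟨b', _, rfl⟩ := hb
    have := (qmap_eq_iff hidem).1 hab
    rwa [hidem, hidem] at this

lemma hom_decomp (F : KUniformHypergraph k p) (H : KUniformHypergraph k n) :
    homCount F H = ∑ r ∈ (Retr : Finset (Fin p → Fin p)),
      (Finset.univ.filter (fun φ => cond F H φ ∧ ker φ = r)).card := by
  rw [homCount_eq]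
  rw [Finset.card_eq_sum_card_fiberwise (f := fun φ => ker φ) (t := Retr)
    (fun φ _ => ker_mem_Retr φ)]
  apply Finset.sum_congr rfl
  intro r _
  rw [Finset.filter_filter]

/-- the fiber at a non-edge-injective retraction is empty -/
lemma fiber_empty (F : KUniformHypergraph k p) (H : KUniformHypergraph k n) {r : Fin p → Fin p}
    (hR : r ∈ (Retr : Finset (Fin p → Fin p)))
    (hr : ¬ ∀ e ∈ F.edges, (e.image r).card = k) :
    (Finset.univ.filter (fun φ : Fin p → Fin n => cond F H φ ∧ ker φ = r)).card = 0 := by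
  simp only [Retr, Finset.mem_filter, Finset.mem_univ, true_and] at hR
  obtain ⟨hidem, hle⟩ := hR
  rw [Finset.card_eq_zero, Finset.filter_eq_empty_iff]
  rintro φ _ ⟨hc, hker⟩
  apply hr
  intro e he
  have hk' : (e.image φ).card = k := H.uniform _ (hc e he)
  have h1 : e.image φ = (e.image r).image φ := by
    rw [Finset.image_image]
    apply Finset.image_congr
    intro x _
    show φ x = φ (r x)
    exact (φ_eq_of_ker (φ := φ) (by rw [hker]; exact (hidem x))).symm
  have h2 : ((e.image r).image φ).card = (e.image r).card := by
    apply Finset.card_image_of_injOn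
    intro a ha b hb hab
    simp only [Finset.coe_image, Set.mem_image] at ha hb
    obtain ⟨a', _, rfl⟩ := ha
    obtain ⟨b', _, rfl⟩ := hb
    have : ker φ (r a') = ker φ (r b') := ker_congr hab
    rw [hker] at this
    rwa [hidem, hidem] at this
  rw [h1, h2] at hk'
  exact hk'

/-- the fiber at an edge-injective retraction counts injective homs from the quotient -/
lemma fiber_card (F : KUniformHypergraph k p) (H : KUniformHypergraph k n) {r : Fin p → Fin p}
    (hR : r ∈ (Retr : Finset (Fin p → Fin p)))
    (hr : ∀ e ∈ F.edges, (e.image r).card = k) :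
    (Finset.univ.filter (fun φ : Fin p → Fin n => cond F H φ ∧ ker φ = r)).card =
      injCount (quotH F r (by
        simp only [Retr, Finset.mem_filter, Finset.mem_univ, true_and] at hR
        exact hR.1) hr) H := by
  simp only [Retr, Finset.mem_filter, Finset.mem_univ, true_and] at hR
  obtain ⟨hidem, hle⟩ := hR
  rw [injCount_eq]
  apply Finset.card_bij' (fun φ _ => φ ∘ smap r) (fun ψ _ => ψ ∘ qmap r hidem)
  · -- forward maps into target
    rintro φ hφ
    simp only [Finset.mem_filter, Finset.mem_univ, true_and] at hφ ⊢
    obtain ⟨hc, hker⟩ := hφ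
    have hφr : ∀ x, φ (r x) = φ x := by
      intro x
      apply φ_eq_of_ker
      rw [hker, hidem]
    constructor
    · intro j j' hjj'
      have : ker φ (smap r j) = ker φ (smap r j') := ker_congr hjj'
      rw [hker, r_smap j, r_smap j'] at this
      exact (((fixS r).orderIsoOfFin rfl).injective (Subtype.ext this))
    · intro e he
      simp only [quotH, Finset.mem_image] at he
      obtain ⟨ed, hed, rfl⟩ := he
      have : (ed.image (qmap r hidem)).image (φ ∘ smap r) = ed.image φ := by
        rw [Finset.image_image]
        apply Finset.image_congr
        intro x _
        show φ (smap r (qmap r hidem x)) = φ x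
        rw [smap_qmap hidem, hφr]
      rw [this]
      exact hc ed hed
  · -- backward maps into source
    rintro ψ hψ
    simp only [Finset.mem_filter, Finset.mem_univ, true_and] at hψ ⊢
    obtain ⟨hinj, hcond⟩ := hψ
    constructor
    · intro e he
      have : e.image (ψ ∘ qmap r hidem) = (e.image (qmap r hidem)).image ψ := by
        rw [Finset.image_image]
      rw [this]
      exact hcond _ (by simp only [quotH, Finset.mem_image]; exact ⟨e, he, rfl⟩)
    · apply ker_of hidem hle
      intro x y
      constructor
      · intro h
        have := hinj h
        exact (qmap_eq_iff hidem).1 this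
      · intro h
        show ψ (qmap r hidem x) = ψ (qmap r hidem y)
        rw [(qmap_eq_iff hidem).2 h]
  · -- left inverse
    rintro φ hφ
    simp only [Finset.mem_filter, Finset.mem_univ, true_and] at hφ
    obtain ⟨hc, hker⟩ := hφ
    funext x
    show φ (smap r (qmap r hidem x)) = φ x
    rw [smap_qmap hidem]
    apply φ_eq_of_ker
    rw [hker, hidem]
  · -- right inverse
    rintro ψ _
    funext j
    show ψ (qmap r hidem (smap r j)) = ψ j
    rw [qmap_smap hidem]

lemma ker_eq_id_iff (φ : Fin p → Fin n) : ker φ = id ↔ Function.Injective φ := by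
  constructor
  · intro h x y hxy
    have := ker_congr hxy
    rw [h] at this
    exact this
  · intro hinj
    apply ker_of (by intro x; rfl) (by intro x; exact le_refl x)
    intro x y
    exact ⟨fun h => hinj h, fun h => by rw [show x = y from h]⟩

lemma fixS_card_lt {r : Fin p → Fin p} (hne : r ≠ id) : (fixS r).card < p := by
  have : fixS r ⊂ Finset.univ := by
    rw [fixS, Finset.filter_ssubset]
    by_contra hcon
    push_neg at hcon
    exact hne (funext fun x => hcon x (Finset.mem_univ x))
  calc (fixS r).card < Finset.univ.card := Finset.card_lt_card this
    _ = p := by simp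

/-- Main induction: equal hom counts imply equal injective hom counts. -/
lemma inj_eq {k n : ℕ} (H₁ H₂ : KUniformHypergraph k n)
    (h : ∀ (p : ℕ) (F : KUniformHypergraph k p), homCount F H₁ = homCount F H₂) :
    ∀ (p : ℕ) (F : KUniformHypergraph k p), injCount F H₁ = injCount F H₂ := by
  intro p
  induction p using Nat.strong_induction_on with
  | _ p ih =>
    intro F
    have hdec := h p F
    rw [hom_decomp F H₁, hom_decomp F H₂] at hdec
    rw [← Finset.add_sum_erase _ _ (id_mem_Retr (p := p)),
        ← Finset.add_sum_erase _ _ (id_mem_Retr (p := p))] at hdec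
    have hrest : ∑ r ∈ (Retr : Finset (Fin p → Fin p)).erase id,
        (Finset.univ.filter (fun φ => cond F H₁ φ ∧ ker φ = r)).card =
        ∑ r ∈ (Retr : Finset (Fin p → Fin p)).erase id,
        (Finset.univ.filter (fun φ => cond F H₂ φ ∧ ker φ = r)).card := by
      apply Finset.sum_congr rfl
      intro r hrmem
      have hR : r ∈ (Retr : Finset (Fin p → Fin p)) := Finset.mem_of_mem_erase hrmem
      have hne : r ≠ id := Finset.ne_of_mem_erase hrmem
      by_cases hr : ∀ e ∈ F.edges, (e.image r).card = k
      · rw [fiber_card F H₁ hR hr, fiber_card F H₂ hR hr]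
        exact ih _ (fixS_card_lt hne) _
      · rw [fiber_empty F H₁ hR hr, fiber_empty F H₂ hR hr]
    rw [hrest] at hdec
    have hid : ∀ (H : KUniformHypergraph k n),
        (Finset.univ.filter (fun φ : Fin p → Fin n => cond F H φ ∧ ker φ = id)).card =
        injCount F H := by
      intro H
      rw [injCount_eq]
      congr 1
      apply Finset.filter_congr
      intro φ _
      rw [ker_eq_id_iff]
      exact ⟨fun ⟨a, b⟩ => ⟨b, a⟩, fun ⟨a, b⟩ => ⟨b, a⟩⟩
    rw [hid H₁, hid H₂] at hdec
    exact Nat.add_right_cancel hdec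

end HGaux

/-- **Homomorphism completeness**: two `k`-uniform hypergraphs on `[n]` are isomorphic
iff they have the same homomorphism counts from every finite `k`-uniform hypergraph. -/
theorem homomorphism_completeness (k n : ℕ) (hk : 1 ≤ k) (hn : 1 ≤ n)
    (H₁ H₂ : KUniformHypergraph k n) :
    (∃ σ : Equiv.Perm (Fin n), H₁.edges.image (fun e => e.image σ) = H₂.edges) ↔
    (∀ (p : ℕ) (F : KUniformHypergraph k p), homCount F H₁ = homCount F H₂) := by
  constructor
  · rintro ⟨σ, hσ⟩ p F
    have hmem : ∀ s : Finset (Fin n), s ∈ H₁.edges ↔ s.image σ ∈ H₂.edges := by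
      intro s
      constructor
      · intro hs
        rw [← hσ]
        exact Finset.mem_image_of_mem _ hs
      · intro hs
        rw [← hσ, Finset.mem_image] at hs
        obtain ⟨t, ht, hts⟩ := hs
        rwa [← Finset.image_injective σ.injective hts]
    unfold homCount
    apply Nat.card_congr
    refine Equiv.subtypeEquiv (Equiv.arrowCongr (Equiv.refl (Fin p)) σ) ?_
    intro φ
    constructor
    · intro hφ e he
      have : e.image (⇑(Equiv.arrowCongr (Equiv.refl (Fin p)) σ) φ) = (e.image φ).image σ := by
        rw [Finset.image_image]
        rfl
      rw [this]
      exact (hmem _).1 (hφ e he)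
    · intro hφ e he
      have h2 := hφ e he
      have : e.image (⇑(Equiv.arrowCongr (Equiv.refl (Fin p)) σ) φ) = (e.image φ).image σ := by
        rw [Finset.image_image]
        rfl
      rw [this] at h2
      exact (hmem _).2 h2
  · intro h
    -- injective hom H₁ → H₂
    have h12 : 0 < HGaux.injCount H₁ H₂ := by
      rw [← HGaux.inj_eq H₁ H₂ h n H₁]
      rw [HGaux.injCount]
      rw [Nat.card_eq_fintype_card, Fintype.card_pos_iff]
      exact ⟨⟨id, Function.injective_id, fun e he => by simpa using he⟩⟩
    have h21 : 0 < HGaux.injCount H₂ H₁ := by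
      rw [HGaux.inj_eq H₁ H₂ h n H₂]
      rw [HGaux.injCount]
      rw [Nat.card_eq_fintype_card, Fintype.card_pos_iff]
      exact ⟨⟨id, Function.injective_id, fun e he => by simpa using he⟩⟩
    rw [HGaux.injCount, Nat.card_eq_fintype_card, Fintype.card_pos_iff] at h12 h21
    obtain ⟨φ, hφinj, hφ⟩ := h12.some
    obtain ⟨τ, hτinj, hτ⟩ := h21.some
    have hφbij : Function.Bijective φ := (Finite.injective_iff_bijective).1 hφinj
    refine ⟨Equiv.ofBijective φ hφbij, ?_⟩
    have hsub : H₁.edges.image (fun e => e.image (Equiv.ofBijective φ hφbij)) ⊆ H₂.edges := by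
      intro s hs
      rw [Finset.mem_image] at hs
      obtain ⟨e, he, rfl⟩ := hs
      exact hφ e he
    apply Finset.eq_of_subset_of_card_le hsub
    have hc1 : (H₁.edges.image (fun e => e.image (Equiv.ofBijective φ hφbij))).card
        = H₁.edges.card := by
      apply Finset.card_image_of_injective
      exact Finset.image_injective (Equiv.ofBijective φ hφbij).injective
    have hc2 : H₂.edges.card ≤ H₁.edges.card := by
      have hsub2 : H₂.edges.image (fun e => e.image τ) ⊆ H₁.edges := by
        intro s hs
        rw [Finset.mem_image] at hs
        obtain ⟨e, he, rfl⟩ := hs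
        exact hτ e he
      calc H₂.edges.card = (H₂.edges.image (fun e => e.image τ)).card :=
            (Finset.card_image_of_injective _ (Finset.image_injective hτinj)).symm
        _ ≤ H₁.edges.card := Finset.card_le_card hsub2
    rw [hc1]
    exact hc2
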